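/- arXiv:1110.0400 — 6 statements merged into one kernel-verified Lean document; each statement's English description precedes it below -/
import Mathlib

section
/- Let V be a Hausdorff locally convex real topological vector space and let K be a nonempty compact convex subset of V. Then every continuous affine map T : K → K (i.e. T(λx+(1−λ)y) = λT(x)+(1−λ)T(y) for all x, y ∈ K and λ ∈ [0,1]) has a fixed point, i.e. there exists p ∈ K with T(p) = p. -/
/-- `T` is affine on `K`: it preserves convex combinations of points of `K`. -/
def IsAffineOn {V : Type*} [AddCommGroup V] [Module ℝ V] (T : V → V) (K : Set V) : Prop :=
  ∀ x ∈ K, ∀ y ∈ K, ∀ t : ℝ, 0 ≤ t → t ≤ 1 →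
    T (t • x + (1 - t) • y) = t • T x + (1 - t) • T y

open Filter Topology

/-- In a topological vector space, scaling points of a compact set by scalars tending to
zero tends to zero. -/
lemma aux_tendsto_smul_zero {V : Type*} [AddCommGroup V] [Module ℝ V] [TopologicalSpace V]
    [IsTopologicalAddGroup V] [ContinuousSMul ℝ V] {C : Set V} (hC : IsCompact C)
    {c : ℕ → V} (hc : ∀ n, c n ∈ C) {ε : ℕ → ℝ} (hε : Tendsto ε atTop (𝓝 0)) :
    Tendsto (fun n => ε n • c n) atTop (𝓝 0) := by
  rw [tendsto_def]
  intro U hU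
  obtain ⟨U', hU'sub, hU'open, hU'0⟩ := mem_nhds_iff.mp hU
  have hopen : IsOpen ((fun p : ℝ × V => p.1 • p.2) ⁻¹' U') :=
    hU'open.preimage continuous_smul
  have hsub : ({(0 : ℝ)} ×ˢ C) ⊆ (fun p : ℝ × V => p.1 • p.2) ⁻¹' U' := by
    rintro ⟨t, x⟩ ⟨ht, -⟩
    simp only [Set.mem_singleton_iff] at ht
    simp [Set.mem_preimage, ht, hU'0]
  obtain ⟨u, v, hu, _, h0u, hCv, huv⟩ :=
    generalized_tube_lemma isCompact_singleton hC hopen hsub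
  filter_upwards [hε.eventually (hu.mem_nhds (h0u rfl))] with n hn
  exact hU'sub (huv (Set.mk_mem_prod hn (hCv (hc n))))

/-- Every continuous affine self-map of a nonempty compact convex subset of a
Hausdorff locally convex real topological vector space has a fixed point. -/
theorem fixed_point_of_continuous_affine_selfmap
    {V : Type*} [AddCommGroup V] [Module ℝ V] [TopologicalSpace V]
    [IsTopologicalAddGroup V] [ContinuousSMul ℝ V] [T2Space V] [LocallyConvexSpace ℝ V]
    (K : Set V) (hne : K.Nonempty) (hcomp : IsCompact K) (hconv : Convex ℝ K)
    (T : V → V) (hmaps : Set.MapsTo T K K) (hcont : ContinuousOn T K)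
    (haff : IsAffineOn T K) :
    ∃ p ∈ K, T p = p := by
  obtain ⟨x₀, hx₀⟩ := hne
  -- iterates
  set f : ℕ → V := fun k => T^[k] x₀ with hf
  have hfK : ∀ k, f k ∈ K := by
    intro k
    induction k with
    | zero => exact hx₀
    | succ n ih => simpa [hf, Function.iterate_succ_apply'] using hmaps ih
  have hfsucc : ∀ k, f (k + 1) = T (f k) := by
    intro k; simp [hf, Function.iterate_succ_apply']
  -- Cesàro averages
  set a : ℕ → V := fun n => ((n : ℝ) + 1)⁻¹ • ∑ k ∈ Finset.range (n + 1), f k with ha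
  set b : ℕ → V := fun n => ((n : ℝ) + 1)⁻¹ • ∑ k ∈ Finset.range (n + 1), f (k + 1) with hb
  have hpos : ∀ n : ℕ, (0 : ℝ) < (n : ℝ) + 1 := fun n => by positivity
  -- the recursive convex-combination structure of the averages
  have hrec : ∀ (g : ℕ → V) (n : ℕ),
      ((n : ℝ) + 2)⁻¹ • ∑ k ∈ Finset.range (n + 2), g k =
        ((n : ℝ) + 2)⁻¹ • g (n + 1) +
          (1 - ((n : ℝ) + 2)⁻¹) • (((n : ℝ) + 1)⁻¹ • ∑ k ∈ Finset.range (n + 1), g k) := by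
    intro g n
    have h2 : (0 : ℝ) < (n : ℝ) + 2 := by positivity
    have hmul : (1 - ((n : ℝ) + 2)⁻¹) * ((n : ℝ) + 1)⁻¹ = ((n : ℝ) + 2)⁻¹ := by
      field_simp
      ring
    rw [Finset.sum_range_succ, smul_add, smul_smul, hmul, add_comm]
  have hmem01 : ∀ n : ℕ, (0 : ℝ) ≤ ((n : ℝ) + 2)⁻¹ ∧ ((n : ℝ) + 2)⁻¹ ≤ 1 := by
    intro n
    constructor
    · positivity
    · have : (0:ℝ) ≤ (n:ℝ) := Nat.cast_nonneg n
      rw [inv_le_one_iff₀]; right; linarith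
  -- key induction: averages lie in K and T maps a n to b n
  have key : ∀ n, a n ∈ K ∧ T (a n) = b n := by
    intro n
    induction n with
    | zero =>
      constructor
      · simpa [ha] using hfK 0
      · simp [ha, hb, hfsucc 0]
    | succ n ih =>
      obtain ⟨ihK, ihT⟩ := ih
      have hcast : ((n + 1 : ℕ) : ℝ) + 1 = (n : ℝ) + 2 := by push_cast; ring
      have haS : a (n + 1) = ((n : ℝ) + 2)⁻¹ • f (n + 1) + (1 - ((n : ℝ) + 2)⁻¹) • a n := by
        simp only [ha, hcast]
        exact hrec f n
      have hbS : b (n + 1) = ((n : ℝ) + 2)⁻¹ • f (n + 2) + (1 - ((n : ℝ) + 2)⁻¹) • b n := by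
        simp only [hb, hcast]
        exact hrec (fun k => f (k + 1)) n
      obtain ⟨ht0, ht1⟩ := hmem01 n
      constructor
      · rw [haS]
        exact hconv (hfK (n + 1)) ihK ht0 (by linarith) (by ring)
      · rw [haS, haff _ (hfK (n + 1)) _ ihK _ ht0 ht1, ihT, ← hfsucc (n + 1), hbS]
  -- the defect T (a n) - a n tends to 0
  have hdiff : ∀ n, T (a n) - a n = ((n : ℝ) + 1)⁻¹ • (f (n + 1) - f 0) := by
    intro n
    rw [(key n).2]
    have : ∑ k ∈ Finset.range (n + 1), f (k + 1) =
        ∑ k ∈ Finset.range (n + 1), f k + (f (n + 1) - f 0) :=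
      calc ∑ k ∈ Finset.range (n + 1), f (k + 1)
          = ∑ k ∈ Finset.range (n + 2), f k - f 0 := by
            rw [Finset.sum_range_succ' f (n + 1)]; abel
        _ = ∑ k ∈ Finset.range (n + 1), f k + (f (n + 1) - f 0) := by
            rw [Finset.sum_range_succ]; abel
    simp only [hb, ha, this, smul_add]
    abel
  set C : Set V := (fun p : V × V => p.1 - p.2) '' (K ×ˢ K) with hC
  have hCcomp : IsCompact C := (hcomp.prod hcomp).image (continuous_fst.sub continuous_snd)
  have hcC : ∀ n, f (n + 1) - f 0 ∈ C := fun n =>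
    ⟨(f (n + 1), f 0), Set.mk_mem_prod (hfK (n + 1)) (hfK 0), rfl⟩
  have hεtend : Tendsto (fun n : ℕ => ((n : ℝ) + 1)⁻¹) atTop (𝓝 0) := by
    simpa [one_div] using tendsto_one_div_add_atTop_nhds_zero_nat (𝕜 := ℝ)
  have hzero : Tendsto (fun n => T (a n) - a n) atTop (𝓝 0) := by
    simp only [hdiff]
    exact aux_tendsto_smul_zero hCcomp hcC hεtend
  -- cluster point via an ultrafilter
  let U : Ultrafilter ℕ := Ultrafilter.of atTop
  have hUle : (U : Filter ℕ) ≤ atTop := Ultrafilter.of_le atTop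
  have hmapU : (U.map a : Filter V) ≤ Filter.principal K := by
    exact Filter.le_principal_iff.mpr (Filter.mem_map.mpr (U.sets_of_superset Filter.univ_mem
      fun n _ => (key n).1))
  obtain ⟨p, hpK, hple⟩ := hcomp.ultrafilter_le_nhds (U.map a) hmapU
  have htend : Tendsto a U (𝓝 p) := hple
  have htendW : Tendsto a U (𝓝[K] p) := by
    rw [tendsto_nhdsWithin_iff]
    exact ⟨htend, Filter.Eventually.filter_mono hUle (Filter.Eventually.of_forall
      fun n => (key n).1)⟩
  have hTtend : Tendsto (fun n => T (a n)) U (𝓝 (T p)) := (hcont p hpK).tendsto.comp htendW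
  have h1 : Tendsto (fun n => T (a n) - a n) U (𝓝 (T p - p)) := hTtend.sub htend
  have h2 : Tendsto (fun n => T (a n) - a n) U (𝓝 0) := hzero.mono_left hUle
  have : T p - p = 0 := tendsto_nhds_unique h1 h2
  exact ⟨p, hpK, by rwa [sub_eq_zero] at this⟩
end

section
/- Let V be a Hausdorff locally convex real topological vector space and let K be a nonempty compact convex subset of V whose affine span is finite-dimensional. Then the group Γ(K) of all affine homeomorphisms of K onto K has a common fixed point: there exists p ∈ K such that T(p) = p for every affine homeomorphism T : K → K. -/
/-- `T` is an affine homeomorphism of `K` onto `K`: a continuous affine self-map of `K`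
with a continuous inverse on `K`. -/
def IsAffineHomeoOf {V : Type*} [AddCommGroup V] [Module ℝ V] [TopologicalSpace V]
    (T : V → V) (K : Set V) : Prop :=
  Set.MapsTo T K K ∧ ContinuousOn T K ∧ IsAffineOn T K ∧
    ∃ S : V → V, Set.MapsTo S K K ∧ ContinuousOn S K ∧
      (∀ p ∈ K, S (T p) = p) ∧ (∀ p ∈ K, T (S p) = p)

lemma exists_linear_of_isAffineOn {E : Type*} [NormedAddCommGroup E] [NormedSpace ℝ E]
    {K : Set E} (hconv : Convex ℝ K) {T : E → E} (haff : IsAffineOn T K)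
    {q : E} (hq : q ∈ interior K) :
    ∃ A : E →ₗ[ℝ] E, ∀ y ∈ K, T y = A (y - q) + T q := by
  classical
  obtain ⟨r, hr0, hr⟩ := Metric.isOpen_iff.1 isOpen_interior q hq
  replace hr : Metric.ball q r ⊆ K := hr.trans interior_subset
  have hqK : q ∈ K := hr (Metric.mem_ball_self hr0)
  set L : E → E := fun v =>
    if h : v = 0 then 0 else ((r / (2 * ‖v‖))⁻¹) • (T (q + (r / (2 * ‖v‖)) • v) - T q) with hL
  have hL0 : L 0 = 0 := by simp [hL]
  -- membership of small multiples
  have hmem : ∀ v : E, ∀ ε : ℝ, 0 < ε → ε * ‖v‖ < r → q + ε • v ∈ K := by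
    intro v ε hε h
    apply hr
    simp only [Metric.mem_ball, dist_eq_norm]
    have : q + ε • v - q = ε • v := by abel
    rw [this, norm_smul, Real.norm_eq_abs, abs_of_pos hε]
    exact h
  -- the two-point step
  have step : ∀ v : E, ∀ a b : ℝ, 0 < a → a ≤ b → q + b • v ∈ K →
      T (q + a • v) - T q = (a / b) • (T (q + b • v) - T q) := by
    intro v a b ha hab hb
    have hb0 : 0 < b := ha.trans_le hab
    have ht0 : 0 ≤ a / b := le_of_lt (div_pos ha hb0)
    have ht1 : a / b ≤ 1 := (div_le_one hb0).2 hab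
    have key := haff _ hb _ hqK (a / b) ht0 ht1
    have harg : (a / b) • (q + b • v) + (1 - a / b) • q = q + a • v := by
      have : (a / b) * b = a := div_mul_cancel₀ a hb0.ne'
      rw [smul_add, smul_smul, this]
      module
    rw [harg] at key
    rw [key]
    rw [smul_sub]
    module
  -- key lemma
  have key : ∀ v : E, ∀ ε : ℝ, 0 < ε → q + ε • v ∈ K → T (q + ε • v) = T q + ε • L v := by
    intro v ε hε hmemε
    by_cases hv : v = 0
    · simp [hv, hL0]
    · set ε₀ := r / (2 * ‖v‖) with hε₀def
      have hnv : 0 < ‖v‖ := norm_pos_iff.2 hv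
      have hε₀ : 0 < ε₀ := div_pos hr0 (by positivity)
      have hmem₀ : q + ε₀ • v ∈ K := by
        apply hmem v ε₀ hε₀
        rw [hε₀def, div_mul_eq_mul_div, mul_comm]
        rw [div_lt_iff₀ (by positivity : (0:ℝ) < 2 * ‖v‖)]
        nlinarith
      have hLv : L v = ε₀⁻¹ • (T (q + ε₀ • v) - T q) := by rw [hL]; beta_reduce; rw [dif_neg hv, hε₀def]
      rcases le_total ε ε₀ with h | h
      · have := step v ε ε₀ hε h hmem₀
        have : T (q + ε • v) - T q = ε • L v := by
          rw [this, hLv, smul_smul, div_eq_mul_inv]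
        linear_combination (norm := module) this
      · have hs := step v ε₀ ε hε₀ h hmemε
        have : ε • L v = T (q + ε • v) - T q := by
          rw [hLv, hs, smul_smul, smul_smul,
            show ε * ε₀⁻¹ * (ε₀ / ε) = 1 by field_simp, one_smul]
        linear_combination (norm := module) this.symm
  -- additivity
  have Ladd : ∀ v w : E, L (v + w) = L v + L w := by
    intro v w
    set ε := r / (2 * (‖v‖ + ‖w‖ + 1)) with hεdef
    have hd : (0:ℝ) < ‖v‖ + ‖w‖ + 1 := by positivity
    have hε : 0 < ε := div_pos hr0 (by positivity)
    have h2ε : (0:ℝ) < 2 * ε := by positivity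
    have hb : ∀ u : E, ‖u‖ ≤ ‖v‖ + ‖w‖ → (2 * ε) * ‖u‖ < r := by
      intro u hu
      have : (2 * ε) * ‖u‖ ≤ (2 * ε) * (‖v‖ + ‖w‖) := by nlinarith
      have h2 : (2 * ε) * (‖v‖ + ‖w‖) < r := by
        rw [hεdef]
        rw [show 2 * (r / (2 * (‖v‖ + ‖w‖ + 1))) = r / (‖v‖ + ‖w‖ + 1) by field_simp]
        rw [div_mul_eq_mul_div, div_lt_iff₀ hd]
        nlinarith
      linarith
    have hm1 : q + (2 * ε) • v ∈ K := hmem v _ h2ε (hb v (by linarith [norm_nonneg w]))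
    have hm2 : q + (2 * ε) • w ∈ K := hmem w _ h2ε (hb w (by linarith [norm_nonneg v]))
    have hm3 : q + ε • (v + w) ∈ K := by
      have := hconv hm1 hm2 (by norm_num : (0:ℝ) ≤ 1/2) (by norm_num : (0:ℝ) ≤ 1/2) (by norm_num)
      have harg : (1/2 : ℝ) • (q + (2*ε) • v) + (1/2 : ℝ) • (q + (2*ε) • w) = q + ε • (v + w) := by
        module
      rwa [harg] at this
    have haffeq := haff _ hm1 _ hm2 (1/2) (by norm_num) (by norm_num)
    have harg : (1/2 : ℝ) • (q + (2*ε) • v) + (1 - 1/2 : ℝ) • (q + (2*ε) • w)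
        = q + ε • (v + w) := by module
    rw [harg] at haffeq
    rw [key (v+w) ε hε hm3] at haffeq
    rw [key v (2*ε) h2ε hm1, key w (2*ε) h2ε hm2] at haffeq
    have : ε • L (v + w) = ε • (L v + L w) := by
      linear_combination (norm := module) haffeq
    exact smul_right_injective E hε.ne' this
  -- negation
  have Lneg : ∀ v : E, L (-v) = - L v := by
    intro v
    set ε := r / (2 * (‖v‖ + 1)) with hεdef
    have hd : (0:ℝ) < ‖v‖ + 1 := by positivity
    have hε : 0 < ε := div_pos hr0 (by positivity)
    have hlt : ε * ‖v‖ < r := by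
      rw [hεdef, div_mul_eq_mul_div, div_lt_iff₀ (by positivity)]
      nlinarith [norm_nonneg v]
    have hm1 : q + ε • v ∈ K := hmem v ε hε hlt
    have hm2 : q + ε • (-v) ∈ K := hmem (-v) ε hε (by rwa [norm_neg])
    have haffeq := haff _ hm1 _ hm2 (1/2) (by norm_num) (by norm_num)
    have harg : (1/2 : ℝ) • (q + ε • v) + (1 - 1/2 : ℝ) • (q + ε • (-v)) = q := by
      module
    rw [harg, key v ε hε hm1, key (-v) ε hε hm2] at haffeq
    have : ε • L (-v) = ε • (- L v) := by
      linear_combination (norm := module) (-2 : ℝ) • haffeq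
    exact smul_right_injective E hε.ne' this
  -- scalar multiplication
  have Lsmulpos : ∀ (c : ℝ), 0 < c → ∀ v : E, L (c • v) = c • L v := by
    intro c hc v
    set ε := r / (2 * (‖v‖ + 1)) with hεdef
    have hε : 0 < ε := div_pos hr0 (by positivity)
    have hlt : ε * ‖v‖ < r := by
      rw [hεdef, div_mul_eq_mul_div, div_lt_iff₀ (by positivity)]
      nlinarith [norm_nonneg v]
    have hm1 : q + ε • v ∈ K := hmem v ε hε hlt
    have hεc : 0 < ε / c := div_pos hε hc
    have hm2 : q + (ε / c) • (c • v) ∈ K := by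
      rw [smul_smul, div_mul_cancel₀ ε hc.ne']
      exact hm1
    have k1 := key v ε hε hm1
    have k2 := key (c • v) (ε / c) hεc hm2
    rw [smul_smul, div_mul_cancel₀ ε hc.ne'] at k2
    rw [k1] at k2
    have : ε • L v = (ε / c) • L (c • v) := by
      linear_combination (norm := module) k2
    have h2 : (ε/c) • (c • L v) = (ε / c) • L (c • v) := by
      rw [smul_smul, div_mul_cancel₀ ε hc.ne']
      exact this
    have := smul_right_injective E hεc.ne' h2
    exact this.symm
  have Lsmul : ∀ (c : ℝ) (v : E), L (c • v) = c • L v := by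
    intro c v
    rcases lt_trichotomy c 0 with h | h | h
    · have : c • v = (-c) • (-v) := by module
      rw [this, Lsmulpos (-c) (by linarith) (-v), Lneg]
      module
    · simp [h, hL0]
    · exact Lsmulpos c h v
  refine ⟨{ toFun := L, map_add' := Ladd, map_smul' := Lsmul }, ?_⟩
  intro y hy
  have h1 : q + (1:ℝ) • (y - q) = y := by module
  have := key (y - q) 1 one_pos (by rwa [h1])
  rw [h1, one_smul] at this
  rw [this]
  simp only [LinearMap.coe_mk, AddHom.coe_mk]
  abel

open MeasureTheory in
/-- If `K` is a nonempty compact convex subset of a Hausdorff locally convex real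
topological vector space whose affine span is finite-dimensional, then the group of all
affine homeomorphisms of `K` onto `K` has a common fixed point. -/
theorem common_fixed_point_of_affine_homeos_of_finiteDimensional
    {V : Type*} [AddCommGroup V] [Module ℝ V] [TopologicalSpace V]
    [IsTopologicalAddGroup V] [ContinuousSMul ℝ V] [T2Space V] [LocallyConvexSpace ℝ V]
    (K : Set V) (hne : K.Nonempty) (hcomp : IsCompact K) (hconv : Convex ℝ K)
    (hfd : FiniteDimensional ℝ (affineSpan ℝ K).direction) :
    ∃ p ∈ K, ∀ T : V → V, IsAffineHomeoOf T K → T p = p := by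
  classical
  obtain ⟨q₀, hq₀⟩ := hne
  set W := (affineSpan ℝ K).direction with hWdef
  haveI : FiniteDimensional ℝ W := hfd
  set Y := (Fin (Module.finrank ℝ W) → ℝ) with hY
  let e₀ : W ≃ₗ[ℝ] Y := (Module.finBasis ℝ W).equivFun
  let e : W ≃L[ℝ] Y := e₀.toContinuousLinearEquiv
  obtain ⟨eV, heV⟩ := LinearMap.exists_extend (e₀ : W →ₗ[ℝ] Y)
  have heVW : ∀ w : W, eV (w : V) = e₀ w := fun w => LinearMap.congr_fun heV w
  have hq₀span : q₀ ∈ affineSpan ℝ K := subset_affineSpan ℝ K hq₀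
  have hKspan : K ⊆ (affineSpan ℝ K : Set V) := subset_affineSpan ℝ K
  have hWmem : ∀ x ∈ affineSpan ℝ K, x - q₀ ∈ W := fun x hx => by
    simpa using AffineSubspace.vsub_mem_direction hx hq₀span
  set F : V → Y := fun x => eV (x - q₀) with hF
  set g : Y → V := fun y => q₀ + (e₀.symm y : V) with hg
  have hFg : ∀ y, F (g y) = y := by
    intro y
    show eV (q₀ + (e₀.symm y : V) - q₀) = y
    rw [add_sub_cancel_left, heVW (e₀.symm y), e₀.apply_symm_apply]
  have hgF : ∀ x ∈ affineSpan ℝ K, g (F x) = x := by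
    intro x hx
    have hw : x - q₀ ∈ W := hWmem x hx
    show q₀ + (e₀.symm (eV (x - q₀)) : V) = x
    rw [show eV (x - q₀) = e₀ ⟨x - q₀, hw⟩ from heVW ⟨x - q₀, hw⟩, e₀.symm_apply_apply]
    show q₀ + (x - q₀) = x
    abel
  have hFaffine : ∀ (a b : V) (t : ℝ), F (t • a + (1 - t) • b) = t • F a + (1 - t) • F b := by
    intro a b t
    have h : t • a + (1 - t) • b - q₀ = t • (a - q₀) + (1 - t) • (b - q₀) := by module
    show eV _ = t • eV (a - q₀) + (1 - t) • eV (b - q₀)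
    rw [h, map_add, _root_.map_smul, _root_.map_smul]
  have hgaffine : ∀ (a b : Y) (t : ℝ), g (t • a + (1 - t) • b) = t • g a + (1 - t) • g b := by
    intro a b t
    show q₀ + ((e₀.symm (t • a + (1 - t) • b) : W) : V)
      = t • (q₀ + (e₀.symm a : V)) + (1 - t) • (q₀ + (e₀.symm b : V))
    rw [map_add, _root_.map_smul, _root_.map_smul]
    push_cast
    module
  have hFcont : ContinuousOn F (affineSpan ℝ K : Set V) := by
    rw [continuousOn_iff_continuous_restrict]
    have hco : Set.restrict (affineSpan ℝ K : Set V) F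
        = (⇑e) ∘ (fun x : (affineSpan ℝ K : Set V) => (⟨x.1 - q₀, hWmem x.1 x.2⟩ : W)) := by
      funext x
      show eV (x.1 - q₀) = e ⟨x.1 - q₀, _⟩
      rw [heVW ⟨x.1 - q₀, _⟩]
      rfl
    change Continuous (Set.restrict (affineSpan ℝ K : Set V) F)
    rw [hco]
    exact e.continuous.comp (Continuous.subtype_mk
      (continuous_subtype_val.sub continuous_const) _)
  set K' : Set Y := F '' K with hK'
  have hK'comp : IsCompact K' := hcomp.image_of_continuousOn (hFcont.mono hKspan)
  have hK'conv : Convex ℝ K' := by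
    rintro y₁ ⟨x₁, hx₁, rfl⟩ y₂ ⟨x₂, hx₂, rfl⟩ a b ha hb hab
    have hb' : b = 1 - a := by linarith
    subst hb'
    rw [← hFaffine]
    exact ⟨_, hconv hx₁ hx₂ ha hb hab, rfl⟩
  let Ft : V →ᵃ[ℝ] Y :=
    { toFun := F
      linear := eV
      map_vadd' := by
        intro p v
        show eV (v + p - q₀) = eV v + eV (p - q₀)
        rw [← map_add]
        congr 1
        abel }
  have hFtcoe : ⇑Ft = F := rfl
  have hspanK' : affineSpan ℝ K' = ⊤ := by
    have hmapeq : affineSpan ℝ K' = (affineSpan ℝ K).map Ft := by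
      rw [AffineSubspace.map_span, hFtcoe]
    rw [hmapeq, eq_top_iff, SetLike.le_def]
    intro y _
    refine AffineSubspace.mem_map.2 ⟨g y, ?_, by rw [hFtcoe]; exact hFg y⟩
    have hmem : ((e₀.symm y : W) : V) +ᵥ q₀ ∈ affineSpan ℝ K :=
      AffineSubspace.vadd_mem_of_mem_direction (e₀.symm y).2 hq₀span
    simpa [hg, add_comm] using hmem
  have hne' : (interior K').Nonempty :=
    (hK'conv.interior_nonempty_iff_affineSpan_eq_top).2 hspanK'
  obtain ⟨q, hq⟩ := hne'
  have hK'meas : MeasurableSet K' := hK'comp.isClosed.measurableSet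
  have hμpos : 0 < volume K' := Measure.measure_pos_of_nonempty_interior _ ⟨q, hq⟩
  have hμlt : volume K' < ⊤ := hK'comp.measure_lt_top
  set m : ℝ := (volume K').toReal with hm
  have hm0 : 0 < m := ENNReal.toReal_pos hμpos.ne' hμlt.ne
  have hInt : IntegrableOn (fun y : Y => y) K' :=
    (continuous_id.continuousOn).integrableOn_compact hK'comp
  set I : Y := ∫ y in K', y with hI
  set c : Y := m⁻¹ • I with hc
  have hcK' : c ∈ K' := by
    have h := hK'conv.set_average_mem hK'comp.isClosed hμpos.ne' hμlt.ne
      (ae_restrict_mem hK'meas) hInt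
    rwa [setAverage_eq] at h
  obtain ⟨x₀, hx₀K, hx₀⟩ := id hcK'
  have hpK : g c ∈ K := by rw [← hx₀, hgF x₀ (hKspan hx₀K)]; exact hx₀K
  refine ⟨g c, hpK, ?_⟩
  intro T hT
  obtain ⟨hmaps, -, haff, S, hSmaps, -, hST, hTS⟩ := hT
  set T' : Y → Y := fun y => F (T (g y)) with hT'
  have hgK : ∀ y ∈ K', g y ∈ K := by
    rintro y ⟨x, hx, rfl⟩; rw [hgF x (hKspan hx)]; exact hx
  have hT'maps : Set.MapsTo T' K' K' := fun y hy => ⟨T (g y), hmaps (hgK y hy), rfl⟩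
  have hT'aff : IsAffineOn T' K' := by
    intro y₁ hy₁ y₂ hy₂ t ht0 ht1
    show F (T (g (t • y₁ + (1 - t) • y₂))) = t • F (T (g y₁)) + (1 - t) • F (T (g y₂))
    rw [hgaffine, haff _ (hgK _ hy₁) _ (hgK _ hy₂) t ht0 ht1, hFaffine]
  obtain ⟨A, hA⟩ := exists_linear_of_isAffineOn hK'conv hT'aff hq
  set Ac : Y →L[ℝ] Y := LinearMap.toContinuousLinearMap A with hAc
  set bv : Y := T' q - A q with hbv
  set M : Y → Y := fun y => Ac y + bv with hMdef
  have hMT' : ∀ y ∈ K', T' y = M y := by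
    intro y hy
    rw [hA y hy]
    show A (y - q) + T' q = Ac y + (T' q - A q)
    have hAcA : Ac y = A y := rfl
    rw [hAcA, map_sub]
    abel
  have hS'K' : ∀ y ∈ K', F (S (g y)) ∈ K' := fun y hy => ⟨S (g y), hSmaps (hgK y hy), rfl⟩
  have hT'S' : ∀ y ∈ K', T' (F (S (g y))) = y := by
    intro y hy
    show F (T (g (F (S (g y))))) = y
    rw [hgF _ (hKspan (hSmaps (hgK y hy))), hTS _ (hgK y hy), hFg]
  have hS'T' : ∀ y ∈ K', F (S (g (T' y))) = y := by
    rintro y ⟨x, hx, rfl⟩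
    show F (S (g (F (T (g (F x)))))) = F x
    rw [hgF x (hKspan hx), hgF _ (hKspan (hmaps hx)), hST x hx]
  have hMK' : M '' K' = K' := by
    apply Set.Subset.antisymm
    · rintro _ ⟨y, hy, rfl⟩
      rw [← hMT' y hy]
      exact hT'maps hy
    · intro y hy
      exact ⟨F (S (g y)), hS'K' y hy, by rw [← hMT' _ (hS'K' y hy), hT'S' y hy]⟩
  have hInj : Set.InjOn M K' := by
    intro y₁ h₁ y₂ h₂ hEq
    have hTT : T' y₁ = T' y₂ := by rw [hMT' _ h₁, hMT' _ h₂]; exact hEq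
    have h3 := congrArg (fun z => F (S (g z))) hTT
    rwa [hS'T' _ h₁, hS'T' _ h₂] at h3
  have himg : volume (M '' K') = ENNReal.ofReal |LinearMap.det A| * volume K' := by
    have h1 : M '' K' = ((fun z : Y => z + bv) ∘ (fun y : Y => A y)) '' K' := rfl
    rw [h1, Set.image_comp, Set.image_add_right, measure_preimage_add_right]
    exact Measure.addHaar_image_linearMap volume A K'
  have hdet1 : |LinearMap.det A| = 1 := by
    rw [hMK'] at himg
    have hre : m = |LinearMap.det A| * m := by
      rw [hm]
      conv_lhs => rw [himg]
      rw [ENNReal.toReal_mul, ENNReal.toReal_ofReal (abs_nonneg _)]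
    have := mul_right_cancel₀ hm0.ne' (by linarith [hre] : |LinearMap.det A| * m = 1 * m)
    linarith
  have hder : ∀ y ∈ K', HasFDerivWithinAt M Ac K' y := fun y _ =>
    ((Ac.hasFDerivAt).add_const bv).hasFDerivWithinAt
  have hchg := integral_image_eq_integral_abs_det_fderiv_smul volume hK'meas hder hInj
    (fun y : Y => y)
  rw [hMK'] at hchg
  have hdetAc : ContinuousLinearMap.det Ac = LinearMap.det A := by
    rw [hAc]
    simp [ContinuousLinearMap.det]
  simp only [hdetAc, hdet1, one_smul] at hchg
  have hIntA : IntegrableOn (fun y : Y => Ac y) K' :=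
    (Ac.continuous.continuousOn).integrableOn_compact hK'comp
  have hIntb : IntegrableOn (fun _ : Y => bv) K' := integrableOn_const hμlt.ne
  have hsplit : (∫ y in K', M y) = Ac I + m • bv := by
    show (∫ y in K', (Ac y + bv)) = _
    rw [integral_add hIntA hIntb, setIntegral_const]
    congr 1
    exact ContinuousLinearMap.integral_comp_comm Ac hInt
  have hIeq : I = Ac I + m • bv := by
    rw [hI, ← hsplit]
    exact hchg
  have hfix : M c = c := by
    show Ac c + bv = c
    rw [hc, _root_.map_smul]
    have : m⁻¹ • (Ac I) + bv = m⁻¹ • (Ac I + m • bv) := by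
      rw [smul_add, smul_smul, inv_mul_cancel₀ hm0.ne', one_smul]
    rw [this, ← hIeq]
  have hTp : F (T (g c)) = c := by
    show T' c = c
    rw [hMT' c hcK']
    exact hfix
  have hgFT := hgF (T (g c)) (hKspan (hmaps hpK))
  rw [hTp] at hgFT
  exact hgFT.symm
end

section
/- Let V be a Hausdorff locally convex real topological vector space and K ⊆ V a nonempty compact convex set. Then any two reflections T and S of K have at least one common fixed point: there exists p₀ ∈ K with T(p₀) = p₀ and S(p₀) = p₀. -/
open Filter Topology

/-- `T` is a reflection of `K`: a continuous affine self-map of `K` with `T ∘ T = id`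
on `K` (hence an affine homeomorphism of `K` onto `K`, its own inverse). -/
def IsReflection {V : Type*} [AddCommGroup V] [Module ℝ V] [TopologicalSpace V]
    (T : V → V) (K : Set V) : Prop :=
  Set.MapsTo T K K ∧ ContinuousOn T K ∧ IsAffineOn T K ∧ ∀ p ∈ K, T (T p) = p

/-- A continuous affine self-map of a nonempty compact convex set has a fixed point
(Markov–Kakutani for a single map, via Cesàro averages). -/
theorem exists_fixed_of_affine
    {V : Type*} [AddCommGroup V] [Module ℝ V] [TopologicalSpace V]
    [IsTopologicalAddGroup V] [ContinuousSMul ℝ V] [T2Space V]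
    (K : Set V) (hne : K.Nonempty) (hcomp : IsCompact K) (hconv : Convex ℝ K)
    (f : V → V) (hmaps : Set.MapsTo f K K) (hcont : ContinuousOn f K)
    (haff : IsAffineOn f K) : ∃ p ∈ K, f p = p := by
  obtain ⟨x₀, hx₀⟩ := hne
  set p : ℕ → V := fun n => f^[n] x₀ with hp_def
  have hp : ∀ n, p n ∈ K := by
    intro n
    induction n with
    | zero => exact hx₀
    | succ n ih => simpa [hp_def, Function.iterate_succ_apply'] using hmaps ih
  set a : ℕ → V := fun n => ((n : ℝ))⁻¹ • ∑ i ∈ Finset.range n, p i with ha_def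
  set b : ℕ → V := fun n => ((n : ℝ))⁻¹ • ∑ i ∈ Finset.range n, p (i + 1) with hb_def
  -- decomposition of averages
  have hdecomp : ∀ (q : ℕ → V) (n : ℕ),
      ((n + 2 : ℝ))⁻¹ • ∑ i ∈ Finset.range (n + 2), q i
        = ((n + 1 : ℝ) / (n + 2)) • (((n + 1 : ℝ))⁻¹ • ∑ i ∈ Finset.range (n + 1), q i)
          + (1 - (n + 1 : ℝ) / (n + 2)) • q (n + 1) := by
    intro q n
    have h1 : (n + 1 : ℝ) ≠ 0 := by positivity
    have h2 : (n + 2 : ℝ) ≠ 0 := by positivity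
    have e1 : (n + 1 : ℝ) / (n + 2) * (n + 1 : ℝ)⁻¹ = ((n + 2 : ℝ))⁻¹ := by
      field_simp
    have e2 : (1 - (n + 1 : ℝ) / (n + 2)) = ((n + 2 : ℝ))⁻¹ := by
      field_simp; norm_num
    rw [smul_smul, e1, e2, Finset.sum_range_succ, smul_add]
  have key : ∀ n : ℕ, a (n + 1) ∈ K ∧ f (a (n + 1)) = b (n + 1) := by
    intro n
    induction n with
    | zero =>
      constructor
      · simp [ha_def, hp_def, hx₀]
      · simp [ha_def, hb_def, hp_def]
    | succ n ih =>
      obtain ⟨ihK, ihf⟩ := ih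
      set t : ℝ := (n + 1 : ℝ) / (n + 2) with ht_def
      have ht0 : (0 : ℝ) ≤ t := by positivity
      have ht1 : t ≤ 1 := by
        rw [ht_def, div_le_one (by positivity)]; linarith
      have hcast : ((n + 1 + 1 : ℕ) : ℝ) = (n : ℝ) + 2 := by push_cast; ring
      have hcast1 : ((n + 1 : ℕ) : ℝ) = (n : ℝ) + 1 := by push_cast; ring
      have hA : a (n + 2) = t • a (n + 1) + (1 - t) • p (n + 1) := by
        simp only [ha_def, hcast, hcast1]
        exact hdecomp p n
      have hmem : a (n + 2) ∈ K := by
        rw [hA]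
        exact hconv ihK (hp (n + 1)) ht0 (by linarith) (by ring)
      refine ⟨hmem, ?_⟩
      have hf2 : f (p (n + 1)) = p (n + 2) := by
        simp [hp_def, Function.iterate_succ_apply']
      rw [hA, haff _ ihK _ (hp (n + 1)) t ht0 ht1, ihf, hf2]
      simp only [hb_def, hcast, hcast1]
      exact (hdecomp (fun i => p (i + 1)) n).symm
  -- the difference tends to zero
  have hdiff : ∀ n : ℕ, f (a (n + 1)) - a (n + 1)
      = ((n + 1 : ℝ))⁻¹ • (p (n + 1) - x₀) := by
    intro n
    rw [(key n).2]
    simp only [ha_def, hb_def]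
    push_cast
    rw [← smul_sub]
    congr 1
    have h1 : ∑ i ∈ Finset.range (n + 2), p i
        = ∑ i ∈ Finset.range (n + 1), p (i + 1) + p 0 := Finset.sum_range_succ' p (n + 1)
    have h2 : ∑ i ∈ Finset.range (n + 2), p i
        = ∑ i ∈ Finset.range (n + 1), p i + p (n + 1) := Finset.sum_range_succ p (n + 1)
    have h0 : p 0 = x₀ := rfl
    have h3 := h1.symm.trans h2
    rw [h0] at h3
    rw [sub_eq_sub_iff_add_eq_add]
    rw [h3]
    exact add_comm _ _
  have htendsto : Tendsto (fun n : ℕ => f (a (n + 1)) - a (n + 1)) atTop (𝓝 0) := by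
    simp only [hdiff]
    have hsmul : Continuous (fun q : ℝ × V => q.1 • q.2) := continuous_smul
    set C : Set V := (fun q : V × V => q.1 - q.2) '' (K ×ˢ K) with hC_def
    have hCcomp : IsCompact C := (hcomp.prod hcomp).image (continuous_fst.sub continuous_snd)
    have hmemC : ∀ n : ℕ, p (n + 1) - x₀ ∈ C := fun n =>
      ⟨(p (n + 1), x₀), Set.mk_mem_prod (hp (n + 1)) hx₀, rfl⟩
    have hε : Tendsto (fun n : ℕ => ((n + 1 : ℝ))⁻¹) atTop (𝓝 0) := by
      have := tendsto_one_div_add_atTop_nhds_zero_nat (𝕜 := ℝ)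
      simpa [one_div] using this
    -- tube lemma via nhdsSet
    have hker : Tendsto (fun q : ℝ × V => q.1 • q.2) (𝓝ˢ (({0} : Set ℝ) ×ˢ C)) (𝓝 0) := by
      have h1 : Tendsto (fun q : ℝ × V => q.1 • q.2) (𝓝ˢ (({0} : Set ℝ) ×ˢ C))
          (𝓝ˢ ({0} : Set V)) :=
        hsmul.tendsto_nhdsSet (fun q hq => by
          rcases hq with ⟨hq1, _⟩
          simp only [Set.mem_singleton_iff] at hq1 ⊢
          simp [hq1])
      simpa [nhdsSet_singleton] using h1
    have hle : (𝓝 (0 : ℝ)) ×ˢ (𝓟 C) ≤ 𝓝ˢ (({0} : Set ℝ) ×ˢ C) := by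
      rw [isCompact_singleton.nhdsSet_prod_eq hCcomp, nhdsSet_singleton]
      exact prod_mono le_rfl principal_le_nhdsSet
    have hpair : Tendsto (fun n : ℕ => (((n + 1 : ℝ))⁻¹, p (n + 1) - x₀)) atTop
        ((𝓝 (0 : ℝ)) ×ˢ (𝓟 C)) :=
      hε.prodMk (tendsto_principal.2 (Eventually.of_forall hmemC))
    exact hker.comp (hpair.mono_right hle)
  -- extract a cluster point
  set F : Filter V := Filter.map (fun n : ℕ => a (n + 1)) atTop with hF_def
  have hFK : F ≤ 𝓟 K :=
    le_principal_iff.2 (mem_map.2 (Eventually.of_forall fun n => (key n).1))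
  have : F.NeBot := Filter.map_neBot
  obtain ⟨z, hzK, hz⟩ := hcomp.exists_clusterPt hFK
  refine ⟨z, hzK, ?_⟩
  -- h = f - id is continuous on K, cluster point maps to cluster point
  have hhcont : ContinuousWithinAt (fun x => f x - x) K z :=
    ((hcont.sub continuousOn_id) z hzK)
  have hinf : 𝓝 z ⊓ F ≤ 𝓝[K] z ⊓ F := by
    refine le_inf ?_ inf_le_right
    calc 𝓝 z ⊓ F ≤ 𝓝 z ⊓ 𝓟 K := inf_le_inf_left _ hFK
    _ = 𝓝[K] z := rfl
  have hne2 : (𝓝 ((fun x => f x - x) z) ⊓ 𝓝 (0 : V)).NeBot := by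
    have h1 : Filter.map (fun x => f x - x) (𝓝 z ⊓ F)
        ≤ 𝓝 (f z - z) ⊓ 𝓝 0 := by
      refine le_inf ?_ ?_
      · calc Filter.map (fun x => f x - x) (𝓝 z ⊓ F)
            ≤ Filter.map (fun x => f x - x) (𝓝[K] z) :=
              Filter.map_mono (hinf.trans inf_le_left)
        _ ≤ 𝓝 (f z - z) := hhcont
      · calc Filter.map (fun x => f x - x) (𝓝 z ⊓ F)
            ≤ Filter.map (fun x => f x - x) F := Filter.map_mono inf_le_right
        _ = Filter.map (fun n : ℕ => f (a (n + 1)) - a (n + 1)) atTop := by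
              rw [hF_def, Filter.map_map]; rfl
        _ ≤ 𝓝 0 := htendsto
    have h2 : (Filter.map (fun x => f x - x) (𝓝 z ⊓ F)).NeBot := Filter.NeBot.map hz _
    exact Filter.neBot_of_le h1
  have := eq_of_nhds_neBot hne2
  exact sub_eq_zero.1 this

/-- Any two reflections of a nonempty compact convex subset of a Hausdorff locally
convex real topological vector space have at least one common fixed point. -/
theorem two_reflections_have_common_fixed_point
    {V : Type*} [AddCommGroup V] [Module ℝ V] [TopologicalSpace V]
    [IsTopologicalAddGroup V] [ContinuousSMul ℝ V] [T2Space V] [LocallyConvexSpace ℝ V]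
    (K : Set V) (hne : K.Nonempty) (hcomp : IsCompact K) (hconv : Convex ℝ K)
    (T S : V → V) (hT : IsReflection T K) (hS : IsReflection S K) :
    ∃ p₀ ∈ K, T p₀ = p₀ ∧ S p₀ = p₀ := by
  obtain ⟨hTm, hTc, hTa, hTi⟩ := hT
  obtain ⟨hSm, hSc, hSa, hSi⟩ := hS
  -- f = T ∘ S is affine continuous self-map of K
  have hfm : Set.MapsTo (fun x => T (S x)) K K := fun x hx => hTm (hSm hx)
  have hfc : ContinuousOn (fun x => T (S x)) K := hTc.comp hSc hSm
  have hfa : IsAffineOn (fun x => T (S x)) K := by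
    intro x hx y hy t ht0 ht1
    simp only
    rw [hSa x hx y hy t ht0 ht1, hTa _ (hSm hx) _ (hSm hy) t ht0 ht1]
  obtain ⟨q, hqK, hq⟩ := exists_fixed_of_affine K hne hcomp hconv _ hfm hfc hfa
  -- A := fixed points of T ∘ S in K
  set A : Set V := {x | x ∈ K ∧ T (S x) = x} with hA_def
  have hAsub : A ⊆ K := fun x hx => hx.1
  have hAne : A.Nonempty := ⟨q, hqK, hq⟩
  -- on A, T x = S x
  have hTS : ∀ x ∈ A, T x = S x := by
    rintro x ⟨hxK, hx⟩
    have h := congrArg T hx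
    rw [hTi _ (hSm hxK)] at h
    exact h.symm
  have hAconv : Convex ℝ A := by
    rintro x ⟨hxK, hx⟩ y ⟨hyK, hy⟩ s t hs0 ht0 hst
    have ht1 : t = 1 - s := by linarith
    have hs1 : s ≤ 1 := by linarith
    subst ht1
    refine ⟨hconv hxK hyK hs0 ht0 hst, ?_⟩
    have := hfa x hxK y hyK s hs0 hs1
    simp only at this
    rw [this, hx, hy]
  -- A is compact: closed subset of the compact space K
  have hAcomp : IsCompact A := by
    haveI : CompactSpace K := isCompact_iff_compactSpace.mp hcomp
    set B : Set K := (fun x : K => (T (S (x : V)), (x : V))) ⁻¹' {p : V × V | p.1 = p.2}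
      with hB_def
    have hgc : Continuous (fun x : K => (T (S (x : V)), (x : V))) :=
      (hfc.restrict.prodMk continuous_subtype_val)
    have hBclosed : IsClosed B := isClosed_eq (continuous_fst.comp hgc) (continuous_snd.comp hgc)
    have hBcomp : IsCompact B := hBclosed.isCompact
    have hAB : A = Subtype.val '' B := by
      ext x
      constructor
      · rintro ⟨hxK, hx⟩
        exact ⟨⟨x, hxK⟩, hx, rfl⟩
      · rintro ⟨⟨y, hyK⟩, hy, rfl⟩
        exact ⟨hyK, hy⟩
    rw [hAB]
    exact hBcomp.image continuous_subtype_val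
  -- T maps A to itself
  have hTmA : Set.MapsTo T A A := by
    rintro x hxA
    obtain ⟨hxK, hx⟩ := hxA
    have h1 : T x = S x := hTS x ⟨hxK, hx⟩
    refine ⟨hTm hxK, ?_⟩
    rw [h1, hSi x hxK, h1.symm]
  obtain ⟨p, hpA, hp⟩ := exists_fixed_of_affine A hAne hAcomp hAconv T hTmA
    (hTc.mono hAsub) (fun x hx y hy t ht0 ht1 => hTa x (hAsub hx) y (hAsub hy) t ht0 ht1)
  refine ⟨p, hAsub hpA, hp, ?_⟩
  rw [← hTS p hpA, hp]
end

section
/- Let V be a Hausdorff locally convex real topological vector space, K ⊆ V a nonempty compact convex set, and S₁, …, Sₙ reflections of K. Let E be the affine span of the union K_{S₁} ∪ … ∪ K_{Sₙ} of their fixed point sets, and set K₀ = E ∩ K. Then Sᵢ(K₀) ⊆ K₀ for each i = 1, …, n. -/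
/-- If `S₁, …, Sₙ` are reflections of a nonempty compact convex set `K`, `E` is the
affine span of the union of their fixed point sets and `K₀ = E ∩ K`, then each `Sᵢ`
maps `K₀` into `K₀`. -/
theorem reflections_preserve_affineSpan_of_fixedSets_inter
    {V : Type*} [AddCommGroup V] [Module ℝ V] [TopologicalSpace V]
    [IsTopologicalAddGroup V] [ContinuousSMul ℝ V] [T2Space V] [LocallyConvexSpace ℝ V]
    (K : Set V) (hne : K.Nonempty) (hcomp : IsCompact K) (hconv : Convex ℝ K)
    (n : ℕ) (S : Fin n → V → V) (hS : ∀ i, IsReflection (S i) K) :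
    ∀ i, Set.MapsTo (S i)
      ((affineSpan ℝ (⋃ j, {p ∈ K | S j p = p}) : Set V) ∩ K)
      ((affineSpan ℝ (⋃ j, {p ∈ K | S j p = p}) : Set V) ∩ K) := by
  intro i x hx
  obtain ⟨hxE, hxK⟩ := hx
  obtain ⟨hmap, -, haff, hinv⟩ := hS i
  have hSxK : S i x ∈ K := hmap hxK
  set m := (1/2 : ℝ) • x + (1/2 : ℝ) • S i x with hm
  have hmK : m ∈ K := hconv hxK hSxK (by norm_num) (by norm_num) (by norm_num)
  have hfix : S i m = m := by
    have h := haff x hxK (S i x) hSxK (1/2) (by norm_num) (by norm_num)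
    rw [hinv x hxK] at h
    rw [hm]
    norm_num at h ⊢
    rw [h]
    abel
  have hmE : m ∈ (affineSpan ℝ (⋃ j, {p ∈ K | S j p = p}) : Set V) := by
    apply subset_affineSpan
    exact Set.mem_iUnion.mpr ⟨i, hmK, hfix⟩
  have key : S i x = (2 : ℝ) • (m -ᵥ x) +ᵥ x := by
    rw [hm]
    simp only [vsub_eq_sub, vadd_eq_add]
    module
  constructor
  · rw [key]
    exact AffineSubspace.smul_vsub_vadd_mem _ 2 hmE hxE hxE
  · exact hSxK
end

section
/- Let V be a Hausdorff locally convex real topological vector space, K ⊆ V a nonempty compact convex set, and S₁, …, Sₙ reflections of K such that each fixed point set K_{Sᵢ} = {p ∈ K : Sᵢ(p) = p} has finite-dimensional affine span. Then K_{S₁} ∩ … ∩ K_{Sₙ} ≠ ∅, i.e. S₁, …, Sₙ have a common fixed point. -/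
set_option linter.unusedSectionVars false
set_option linter.unusedVariables false
set_option maxHeartbeats 1000000

namespace ReflAux

variable {V : Type*} [AddCommGroup V] [Module ℝ V]

/-- apply the reflections named by the list, head first -/
def app {n : ℕ} (S : Fin n → V → V) : List (Fin n) → V → V
  | [], x => x
  | i :: l, x => app S l (S i x)

variable {n : ℕ} {S : Fin n → V → V} {K : Set V}

@[simp] lemma app_nil (x : V) : app S [] x = x := rfl

@[simp] lemma app_cons (i : Fin n) (l : List (Fin n)) (x : V) :
    app S (i :: l) x = app S l (S i x) := rfl

lemma app_append (l₁ l₂ : List (Fin n)) (x : V) :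
    app S (l₁ ++ l₂) x = app S l₂ (app S l₁ x) := by
  induction l₁ generalizing x with
  | nil => rfl
  | cons i l ih => simp [ih]

lemma app_mapsTo (hK : ∀ i, Set.MapsTo (S i) K K) (l : List (Fin n)) :
    Set.MapsTo (app S l) K K := by
  induction l with
  | nil => exact Set.mapsTo_id K
  | cons i l ih => exact fun x hx => ih (hK i hx)

lemma app_reverse (hK : ∀ i, Set.MapsTo (S i) K K)
    (hinv : ∀ i, ∀ x ∈ K, S i (S i x) = x) (l : List (Fin n)) :
    ∀ x ∈ K, app S l.reverse (app S l x) = x := by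
  induction l with
  | nil => intro x _; rfl
  | cons i l ih =>
    intro x hx
    have h1 : (i :: l).reverse = l.reverse ++ [i] := by simp
    rw [app_cons, h1, app_append, ih (S i x) (hK i hx)]
    exact hinv i x hx

lemma app_affineOn (hK : ∀ i, Set.MapsTo (S i) K K)
    (haff : ∀ i, IsAffineOn (S i) K) (l : List (Fin n)) :
    IsAffineOn (app S l) K := by
  induction l with
  | nil => intro x _ y _ t _ _; rfl
  | cons i l ih =>
    intro x hx y hy t ht0 ht1
    rw [app_cons, haff i x hx y hy t ht0 ht1, app_cons, app_cons]
    exact ih (S i x) (hK i hx) (S i y) (hK i hy) t ht0 ht1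

lemma app_continuousOn [TopologicalSpace V] (hK : ∀ i, Set.MapsTo (S i) K K)
    (hc : ∀ i, ContinuousOn (S i) K) (l : List (Fin n)) :
    ContinuousOn (app S l) K := by
  induction l with
  | nil => exact continuousOn_id
  | cons i l ih => exact ih.comp (hc i) (hK i)

/-- affine difference proportionality on a convex set -/
lemma affine_sub {C : Set V} (hC : Convex ℝ C) {g : V → V} (hg : IsAffineOn g C)
    {a b c d : V} (ha : a ∈ C) (hb : b ∈ C) (hc : c ∈ C) (hd : d ∈ C)
    {lam : ℝ} (hlam : 0 ≤ lam) (h : b - a = lam • (d - c)) :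
    g b - g a = lam • (g d - g c) := by
  have h1lam : (0:ℝ) < 1 + lam := by linarith
  set t : ℝ := 1 / (1 + lam) with ht
  have ht0 : 0 ≤ t := by positivity
  have ht1 : t ≤ 1 := by
    rw [ht, div_le_one h1lam]; linarith
  have htlam : 1 - t = t * lam := by
    rw [ht, div_mul_eq_mul_div, one_mul, eq_div_iff h1lam.ne', sub_mul, one_div_mul_cancel h1lam.ne']
    ring
  have hmid : t • b + (1 - t) • c = t • a + (1 - t) • d := by
    have hb' : b = a + lam • (d - c) := by rw [← h]; abel
    rw [hb', smul_add, htlam, mul_smul, mul_smul, smul_sub]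
    module
  have e1 := hg b hb c hc t ht0 ht1
  have e2 := hg a ha d hd t ht0 ht1
  rw [hmid] at e1
  rw [e2] at e1
  have e3 : t • (g b - g a) = (1 - t) • (g d - g c) := by
    rw [smul_sub, smul_sub, sub_eq_sub_iff_add_eq_add, ← e1]
    abel
  have tne : t ≠ 0 := by positivity
  rw [htlam, mul_smul] at e3
  exact smul_right_injective V tne e3

lemma vanish_on_subspace {V : Type*} [AddCommGroup V] [Module ℝ V] [TopologicalSpace V]
    (f : V →L[ℝ] ℝ) {W : Submodule ℝ V} {u : ℝ} (hfu : ∀ w ∈ (W : Set V), f w < u) :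
    ∀ w ∈ W, f w = 0 := by
  intro w hw
  by_contra hfw
  have h2 : f (((u + 1) / f w) • w) < u := hfu _ (W.smul_mem _ hw)
  rw [map_smul, smul_eq_mul, div_mul_cancel₀ _ hfw] at h2
  linarith

lemma exists_clm_injOn_subspace {V : Type*} [AddCommGroup V] [Module ℝ V] [TopologicalSpace V]
    [IsTopologicalAddGroup V] [ContinuousSMul ℝ V] [T2Space V] [LocallyConvexSpace ℝ V]
    (U : Submodule ℝ V) [FiniteDimensional ℝ U] :
    ∃ Λ : V →L[ℝ] EuclideanSpace ℝ (Fin (Module.finrank ℝ U)),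
      ∀ u ∈ U, Λ u = 0 → u = 0 := by
  set d := Module.finrank ℝ U with hd
  let b : Module.Basis (Fin d) ℝ U := Module.finBasis ℝ U
  have key : ∀ j : Fin d, ∃ f : V →L[ℝ] ℝ, f (b j) = 1 ∧ ∀ k, k ≠ j → f (b k) = 0 := by
    intro j
    set Wj : Submodule ℝ V := Submodule.span ℝ ((fun k => (b k : V)) '' {k | k ≠ j}) with hWj
    haveI : FiniteDimensional ℝ Wj :=
      FiniteDimensional.span_of_finite ℝ ((Set.toFinite _).image _)
    have hclosed : IsClosed (Wj : Set V) := Submodule.closed_of_finiteDimensional Wj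
    have hnot : (b j : V) ∉ Wj := by
      intro hmem
      have hmap : Wj = Submodule.map U.subtype
          (Submodule.span ℝ ((fun k => b k) '' {k | k ≠ j})) := by
        rw [Submodule.map_span, Set.image_image]
        rfl
      rw [hmap] at hmem
      rcases Submodule.mem_map.1 hmem with ⟨w, hw, hweq⟩
      have hwbj : w = b j := Subtype.coe_injective hweq
      rw [hwbj] at hw
      exact b.linearIndependent.notMem_span_image (by simp) hw
    obtain ⟨f, u, hfu, hub⟩ := geometric_hahn_banach_closed_point Wj.convex hclosed hnot
    have hu0 : 0 < u := by simpa using hfu 0 (Wj.zero_mem)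
    have hW0 : ∀ w ∈ Wj, f w = 0 := vanish_on_subspace f hfu
    have hfbj : f (b j) ≠ 0 := (hu0.trans hub).ne'
    refine ⟨(f (b j))⁻¹ • f, ?_, ?_⟩
    · simp [inv_mul_cancel₀ hfbj]
    · intro k hk
      have hbk : (b k : V) ∈ Wj := Submodule.subset_span ⟨k, hk, rfl⟩
      simp [hW0 _ hbk]
  choose f hf1 hf0 using key
  let Λ₀ : V →L[ℝ] (Fin d → ℝ) := ContinuousLinearMap.pi f
  let e : (Fin d → ℝ) ≃L[ℝ] EuclideanSpace ℝ (Fin d) :=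
    (PiLp.continuousLinearEquiv 2 ℝ (fun _ : Fin d => ℝ)).symm
  refine ⟨e.toContinuousLinearMap.comp Λ₀, ?_⟩
  intro x hx h0
  have h00 : Λ₀ x = 0 := by
    have : e (Λ₀ x) = e 0 := by simpa using h0
    exact e.injective this
  have hcoord : ∀ j, f j x = 0 := by
    intro j
    have := congrFun h00 j
    simpa [Λ₀, ContinuousLinearMap.pi_apply] using this
  have hrepr : ∀ j, b.repr ⟨x, hx⟩ j = 0 := by
    intro j
    have hsum := b.sum_repr ⟨x, hx⟩
    have hsum' : (∑ i, b.repr ⟨x, hx⟩ i • (b i : V)) = x := by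
      have := congrArg (Subtype.val) hsum
      rw [Submodule.coe_sum] at this
      simpa only [Submodule.coe_smul] using this
    have hkey : f j (∑ i, b.repr ⟨x, hx⟩ i • (b i : V)) = b.repr ⟨x, hx⟩ j := by
      rw [map_sum, Finset.sum_eq_single j]
      · simp [hf1]
      · intro k _ hk
        simp [hf0 j k hk]
      · intro h; exact absurd (Finset.mem_univ j) h
    rw [hsum'] at hkey
    rw [← hkey, hcoord j]
  have : b.repr ⟨x, hx⟩ = 0 := Finsupp.ext hrepr
  have hx0 : (⟨x, hx⟩ : U) = 0 := by
    rwa [LinearEquiv.map_eq_zero_iff] at this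
  simpa using congrArg Subtype.val hx0

end ReflAux

open ReflAux

/-- Finitely many reflections of a nonempty compact convex set `K`, each of whose fixed
point sets has finite-dimensional affine span, have a common fixed point. -/
theorem finitely_many_reflections_common_fixed_point
    {V : Type*} [AddCommGroup V] [Module ℝ V] [TopologicalSpace V]
    [IsTopologicalAddGroup V] [ContinuousSMul ℝ V] [T2Space V] [LocallyConvexSpace ℝ V]
    (K : Set V) (hne : K.Nonempty) (hcomp : IsCompact K) (hconv : Convex ℝ K)
    (n : ℕ) (S : Fin n → V → V) (hS : ∀ i, IsReflection (S i) K)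
    (hfd : ∀ i, FiniteDimensional ℝ (affineSpan ℝ {p ∈ K | S i p = p}).direction) :
    ∃ p ∈ K, ∀ i, S i p = p := by
  classical
  obtain ⟨o, hoK⟩ := hne
  have hSm : ∀ i, Set.MapsTo (S i) K K := fun i => (hS i).1
  have hSc : ∀ i, ContinuousOn (S i) K := fun i => (hS i).2.1
  have hSa : ∀ i, IsAffineOn (S i) K := fun i => (hS i).2.2.1
  have hSi : ∀ i, ∀ p ∈ K, S i (S i p) = p := fun i => (hS i).2.2.2
  set Fix : Fin n → Set V := fun i => {p ∈ K | S i p = p} with hFixdef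
  -- the midpoint of x and S i x is a fixed point of S i
  have hmid : ∀ i, ∀ x ∈ K, ((1/2 : ℝ) • x + (1/2 : ℝ) • S i x) ∈ Fix i := by
    intro i x hx
    have hx' := hSm i hx
    have hmem : ((1/2 : ℝ) • x + (1/2 : ℝ) • S i x) ∈ K :=
      hconv hx hx' (by norm_num) (by norm_num) (by norm_num)
    refine ⟨hmem, ?_⟩
    have h := hSa i x hx (S i x) hx' (1/2) (by norm_num) (by norm_num)
    rw [hSi i x hx] at h
    have h12 : (1 : ℝ) - 1/2 = 1/2 := by norm_num
    rw [h12] at h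
    rw [h]
    abel
  -- the finite-dimensional subspace spanned by all fixed point sets
  set U : Submodule ℝ V := ⨆ i, Submodule.span ℝ ((fun p => p - o) '' Fix i) with hUdef
  haveI hFDi : ∀ i, FiniteDimensional ℝ
      ↥(Submodule.span ℝ ((fun p => p - o) '' Fix i)) := by
    intro i
    rcases Set.eq_empty_or_nonempty (Fix i) with hE | ⟨q, hq⟩
    · rw [hE, Set.image_empty, Submodule.span_empty]
      infer_instance
    · haveI := hfd i
      haveI h1 : FiniteDimensional ℝ ↥(vectorSpan ℝ (Fix i)) := by
        rw [← direction_affineSpan]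
        exact hfd i
    
      have hle : Submodule.span ℝ ((fun p => p - o) '' Fix i) ≤
          vectorSpan ℝ (Fix i) ⊔ Submodule.span ℝ {q - o} := by
        rw [Submodule.span_le]
        rintro _ ⟨p, hp, rfl⟩
        show p - o ∈ (vectorSpan ℝ (Fix i) ⊔ Submodule.span ℝ {q - o} : Submodule ℝ V)
        have hsplit : p - o = (p - q) + (q - o) := by abel
        rw [hsplit]
        have h2 : p - q ∈ vectorSpan ℝ (Fix i) := by
          have := vsub_mem_vectorSpan ℝ hp hq
          simpa using this
        exact Submodule.add_mem_sup h2 (Submodule.mem_span_singleton_self _)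
      exact Submodule.finiteDimensional_of_le hle
  haveI hUfd : FiniteDimensional ℝ U := by
    rw [hUdef]
    infer_instance
  -- the finite-dimensional compact convex invariant set K₀
  set K₀ : Set V := {x ∈ K | x - o ∈ U} with hK₀def
  have hK₀K : K₀ ⊆ K := fun x hx => hx.1
  have hoK₀ : o ∈ K₀ := ⟨hoK, by simp⟩
  have hK₀conv : Convex ℝ K₀ := by
    intro x hx y hy a bb ha hb hab
    refine ⟨hconv hx.1 hy.1 ha hb hab, ?_⟩
    have h1 : a • o + bb • o = o := by rw [← add_smul, hab, one_smul]
    have h2 : a • x + bb • y - o = a • (x - o) + bb • (y - o) := by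
      rw [smul_sub, smul_sub]
      rw [sub_add_sub_comm, h1]
    show a • x + bb • y - o ∈ U
    rw [h2]
    exact U.add_mem (U.smul_mem _ hx.2) (U.smul_mem _ hy.2)
  have hUclosed : IsClosed (U : Set V) := Submodule.closed_of_finiteDimensional U
  have hK₀comp : IsCompact K₀ := by
    have heq : K₀ = K ∩ ((fun x => x - o) ⁻¹' U) := rfl
    rw [heq]
    exact hcomp.inter_right (hUclosed.preimage (continuous_id.sub continuous_const))
  -- invariance of K₀ under each reflection
  have hFixU : ∀ i, ∀ p ∈ Fix i, p - o ∈ U := by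
    intro i p hp
    have : p - o ∈ Submodule.span ℝ ((fun p => p - o) '' Fix i) :=
      Submodule.subset_span ⟨p, hp, rfl⟩
    exact Submodule.mem_iSup_of_mem i this
  have hK₀inv : ∀ i, Set.MapsTo (S i) K₀ K₀ := by
    intro i x hx
    refine ⟨hSm i hx.1, ?_⟩
    have hmU : ((1/2 : ℝ) • x + (1/2 : ℝ) • S i x) - o ∈ U :=
      hFixU i _ (hmid i x hx.1)
    have hexp : S i x - o =
        (2:ℝ) • (((1/2 : ℝ) • x + (1/2 : ℝ) • S i x) - o) - (x - o) := by
      rw [smul_sub, smul_add, smul_smul, smul_smul]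
      norm_num
      module
    show S i x - o ∈ U
    rw [hexp]
    exact U.sub_mem (U.smul_mem _ hmU) hx.2
  -- words in the reflections
  have hSmy : ∀ (i : Fin n), Set.MapsTo (S i) K₀ K₀ := hK₀inv
  have hSay : ∀ i, IsAffineOn (S i) K₀ := fun i x hx y hy => hSa i x hx.1 y hy.1
  have hScy : ∀ i, ContinuousOn (S i) K₀ := fun i => (hSc i).mono hK₀K
  -- a linear map to Euclidean space injective on U
  obtain ⟨Λ, hΛinj⟩ := exists_clm_injOn_subspace U
  have hsubU : ∀ x ∈ K₀, ∀ y ∈ K₀, x - y ∈ U := by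
    intro x hx y hy
    have h := U.sub_mem hx.2 hy.2
    simpa using h
  have hΛinj' : ∀ x ∈ K₀, ∀ y ∈ K₀, Λ x = Λ y → x = y := by
    intro x hx y hy h
    have h0 : Λ (x - y) = 0 := by rw [map_sub, h, sub_self]
    exact sub_eq_zero.1 (hΛinj _ (hsubU x hx y hy) h0)
  set C : Set (EuclideanSpace ℝ (Fin (Module.finrank ℝ U))) := Λ '' K₀ with hCdef
  have hCcomp : IsCompact C := hK₀comp.image Λ.continuous
  have hCconv : Convex ℝ C := by
    have := hK₀conv.linear_image Λ.toLinearMap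
    simpa using this
  have hCne : C.Nonempty := ⟨Λ o, o, hoK₀, rfl⟩
  obtain ⟨R, hR⟩ : ∃ R, ∀ y ∈ K₀, ‖Λ y‖ ≤ R := by
    obtain ⟨R, hR⟩ := hCcomp.isBounded.subset_closedBall 0
    refine ⟨R, fun y hy => ?_⟩
    have := hR ⟨y, hy, rfl⟩
    rwa [Metric.mem_closedBall, dist_zero_right] at this
  have hR0 : 0 ≤ R := le_trans (norm_nonneg _) (hR o hoK₀)
  -- a relatively interior ball of C
  obtain ⟨z, hzC, ε, hε, hball⟩ :
      ∃ z, z ∈ C ∧ ∃ ε > 0, ∀ v : EuclideanSpace ℝ (Fin (Module.finrank ℝ U)),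
        v ∈ vectorSpan ℝ C → ‖v‖ < ε → z + v ∈ C := by
    obtain ⟨z, hz⟩ := Set.Nonempty.intrinsicInterior hCconv hCne
    obtain ⟨z', hz'int, rfl⟩ := hz
    refine ⟨z', intrinsicInterior_subset ⟨z', hz'int, rfl⟩, ?_⟩
    rw [mem_interior_iff_mem_nhds, Metric.mem_nhds_iff] at hz'int
    obtain ⟨ε, hε, hsub⟩ := hz'int
    refine ⟨ε, hε, fun v hv hnv => ?_⟩
    have hmem : (z' : EuclideanSpace ℝ (Fin (Module.finrank ℝ U))) + v ∈ affineSpan ℝ C := by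
      have hdir : v ∈ (affineSpan ℝ C).direction := by rwa [direction_affineSpan]
      have := AffineSubspace.vadd_mem_of_mem_direction hdir z'.2
      simpa [add_comm] using this
    have hball' : (⟨(z' : EuclideanSpace ℝ (Fin (Module.finrank ℝ U))) + v, hmem⟩ :
        affineSpan ℝ C) ∈ Metric.ball z' ε := by
      rw [Metric.mem_ball, Subtype.dist_eq, dist_eq_norm]
      simpa using hnv
    exact hsub hball'
  -- uniform Lipschitz bound for all words
  set r : ℝ := ε / 2 with hrdef
  have hr : 0 < r := by positivity
  set M : ℝ := (R + R) / (2 * r) + 1 with hMdef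
  have hM1 : (1:ℝ) ≤ M := by
    rw [hMdef]
    have : 0 ≤ (R + R) / (2 * r) := by positivity
    linarith
  have hM0 : 0 < M := lt_of_lt_of_le one_pos hM1
  have hD : ∀ p ∈ K₀, ∀ q ∈ K₀, ‖Λ p - Λ q‖ ≤ R + R := by
    intro p hp q hq
    calc ‖Λ p - Λ q‖ ≤ ‖Λ p‖ + ‖Λ q‖ := norm_sub_le _ _
    _ ≤ R + R := add_le_add (hR p hp) (hR q hq)
  have hLip : ∀ l : List (Fin n), ∀ a ∈ K₀, ∀ b ∈ K₀,
      ‖Λ (app S l a) - Λ (app S l b)‖ ≤ M * ‖Λ a - Λ b‖ := by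
    intro l a ha b hb
    rcases eq_or_ne (Λ a) (Λ b) with heq | hne
    · have hab : a = b := hΛinj' a ha b hb heq
      rw [hab]
      simp [mul_nonneg hM0.le (norm_nonneg _)]
    · set s : ℝ := ‖Λ b - Λ a‖ with hsdef
      have hs : 0 < s := by
        rw [hsdef, norm_pos_iff, sub_ne_zero]
        exact hne.symm
      set w := (r / s) • (Λ b - Λ a) with hwdef
      have hwspan : w ∈ vectorSpan ℝ C := by
        apply Submodule.smul_mem
        have hbC : Λ b ∈ C := ⟨b, hb, rfl⟩
        have haC : Λ a ∈ C := ⟨a, ha, rfl⟩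
        have := vsub_mem_vectorSpan ℝ hbC haC
        simpa using this
      have hwnorm : ‖w‖ < ε := by
        rw [hwdef, norm_smul, Real.norm_eq_abs, abs_of_pos (by positivity : (0:ℝ) < r / s),
          ← hsdef, div_mul_cancel₀ _ hs.ne']
        rw [hrdef]
        linarith
      obtain ⟨pp, hppK, hppeq⟩ := hball w hwspan hwnorm
      obtain ⟨pm, hpmK, hpmeq⟩ := hball (-w) (Submodule.neg_mem _ hwspan)
        (by rwa [norm_neg])
      -- b - a = (s/(2r)) • (pp - pm)
      have hlam0 : (0:ℝ) ≤ s / (2 * r) := by positivity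
      have hdiff : b - a = (s / (2 * r)) • (pp - pm) := by
        have helt : b - a - (s / (2 * r)) • (pp - pm) ∈ U := by
          exact U.sub_mem (hsubU b hb a ha)
            (U.smul_mem _ (hsubU pp hppK pm hpmK))
        have hzero : Λ (b - a - (s / (2 * r)) • (pp - pm)) = 0 := by
          rw [map_sub, map_sub, map_smul, map_sub, hppeq, hpmeq]
          have h2w : z + w - (z + -w) = (2:ℝ) • w := by
            rw [two_smul]; abel
          rw [h2w, hwdef, smul_smul, smul_smul]
          have hco : s / (2 * r) * 2 * (r / s) = 1 := by
            field_simp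
          rw [hco, one_smul, sub_self]
        have := hΛinj _ helt hzero
        rwa [sub_eq_zero] at this
      have haff := affine_sub hK₀conv (app_affineOn hSmy hSay l) ha hb hpmK hppK hlam0 hdiff
      have happp := app_mapsTo hSmy l hppK
      have happm := app_mapsTo hSmy l hpmK
      have hnorm : ‖Λ (app S l b) - Λ (app S l a)‖ =
          (s / (2 * r)) * ‖Λ (app S l pp) - Λ (app S l pm)‖ := by
        rw [← map_sub, haff, map_smul, norm_smul, Real.norm_eq_abs, abs_of_nonneg hlam0,
          map_sub]
      have hbound : ‖Λ (app S l b) - Λ (app S l a)‖ ≤ (s / (2 * r)) * (R + R) := by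
        rw [hnorm]
        exact mul_le_mul_of_nonneg_left (hD _ happp _ happm) hlam0
      have hfin : (s / (2 * r)) * (R + R) ≤ M * s := by
        have h1 : s / (2 * r) * (R + R) = ((R + R) / (2 * r)) * s := by ring
        rw [h1, hMdef]
        have h2 : (R + R) / (2 * r) ≤ (R + R) / (2 * r) + 1 := by linarith
        exact mul_le_mul_of_nonneg_right h2 hs.le
      calc ‖Λ (app S l a) - Λ (app S l b)‖
          = ‖Λ (app S l b) - Λ (app S l a)‖ := (norm_sub_rev _ _)
        _ ≤ (s / (2 * r)) * (R + R) := hbound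
        _ ≤ M * s := hfin
        _ = M * ‖Λ a - Λ b‖ := by rw [hsdef, norm_sub_rev]
  -- the invariant strongly convex function Q
  set Hf : List (Fin n) → V → ℝ :=
    fun l x => ‖Λ (app S l x)‖ * ‖Λ (app S l x)‖ with hHfdef
  set Q : V → ℝ := fun x => ⨆ l : List (Fin n), Hf l x with hQdef
  have hbdd : ∀ x ∈ K₀, BddAbove (Set.range fun l => Hf l x) := by
    intro x hx
    refine ⟨R * R, ?_⟩
    rintro _ ⟨l, rfl⟩
    have h1 : ‖Λ (app S l x)‖ ≤ R := hR _ (app_mapsTo hSmy l hx)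
    exact mul_self_le_mul_self (norm_nonneg _) h1
  have hHle : ∀ x ∈ K₀, ∀ l, Hf l x ≤ Q x := fun x hx l => le_ciSup (hbdd x hx) l
  have hH0 : ∀ l x, 0 ≤ Hf l x := fun l x => mul_self_nonneg _
  have hQ0 : ∀ x ∈ K₀, 0 ≤ Q x := fun x hx => le_trans (hH0 [] x) (hHle x hx [])
  have hQS : ∀ i, ∀ x ∈ K₀, Q (S i x) = Q x := by
    intro i x hx
    have hx' : S i x ∈ K₀ := hK₀inv i hx
    apply le_antisymm
    · apply ciSup_le
      intro l
      have h1 : Hf l (S i x) = Hf (i :: l) x := rfl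
      rw [h1]
      exact hHle x hx _
    · apply ciSup_le
      intro l
      have h1 : app S (i :: l) (S i x) = app S l x := by
        rw [app_cons, hSi i x hx.1]
      have h2 : Hf l x = Hf (i :: l) (S i x) := by
        rw [hHfdef]
        simp only [h1]
      rw [h2]
      exact hHle _ hx' _
  set m₀ : ℝ := sInf (Q '' K₀) with hm₀def
  have hQim_ne : (Q '' K₀).Nonempty := ⟨Q o, o, hoK₀, rfl⟩
  have hQim_bdd : BddBelow (Q '' K₀) := by
    refine ⟨0, ?_⟩
    rintro _ ⟨x, hx, rfl⟩
    exact hQ0 x hx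
  have hclosedA : ∀ t : ℝ, IsClosed {x ∈ K₀ | Q x ≤ t} := by
    intro t
    have heq : {x ∈ K₀ | Q x ≤ t} = ⋂ l : List (Fin n), {x ∈ K₀ | Hf l x ≤ t} := by
      ext x
      simp only [Set.mem_setOf_eq, Set.mem_iInter]
      constructor
      · rintro ⟨hx, hq⟩ l
        exact ⟨hx, le_trans (hHle x hx l) hq⟩
      · intro h
        have hx : x ∈ K₀ := (h []).1
        exact ⟨hx, ciSup_le fun l => (h l).2⟩
    rw [heq]
    apply isClosed_iInter
    intro l
    have hcont : ContinuousOn (fun x => Hf l x) K₀ := by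
      have h1 : ContinuousOn (app S l) K₀ := app_continuousOn hSmy hScy l
      have h2 : ContinuousOn (fun x => Λ (app S l x)) K₀ :=
        Λ.continuous.comp_continuousOn h1
      exact h2.norm.mul h2.norm
    have heq2 : {x ∈ K₀ | Hf l x ≤ t} = K₀ ∩ (fun x => Hf l x) ⁻¹' Set.Iic t := rfl
    rw [heq2]
    exact hcont.preimage_isClosed_of_isClosed hK₀comp.isClosed isClosed_Iic
  obtain ⟨xm, hxmK₀, hxmQ⟩ : ∃ x ∈ K₀, Q x = m₀ := by
    have hne' : Nonempty {t : ℝ // m₀ < t} := ⟨⟨m₀ + 1, lt_add_one m₀⟩⟩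
    set A : {t : ℝ // m₀ < t} → Set V := fun t => {x ∈ K₀ | Q x ≤ t.1} with hAdef
    have hAne : ∀ t, (A t).Nonempty := by
      intro t
      obtain ⟨y, hy, hlt⟩ := exists_lt_of_csInf_lt hQim_ne t.2
      obtain ⟨x, hx, rfl⟩ := hy
      exact ⟨x, hx, hlt.le⟩
    have hAclosed : ∀ t, IsClosed (A t) := fun t => hclosedA t.1
    have hAcomp : ∀ t, IsCompact (A t) := fun t =>
      hK₀comp.of_isClosed_subset (hAclosed t) (fun x hx => hx.1)
    have hAdir : Directed (· ⊇ ·) A := by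
      intro t t'
      refine ⟨⟨min t.1 t'.1, lt_min t.2 t'.2⟩, ?_, ?_⟩
      · intro x hx
        exact ⟨hx.1, le_trans hx.2 (min_le_left _ _)⟩
      · intro x hx
        exact ⟨hx.1, le_trans hx.2 (min_le_right _ _)⟩
    obtain ⟨x, hx⟩ := IsCompact.nonempty_iInter_of_directed_nonempty_isCompact_isClosed
      A hAdir hAne hAcomp hAclosed
    simp only [Set.mem_iInter] at hx
    have hxK₀ : x ∈ K₀ := (hx ⟨m₀ + 1, lt_add_one m₀⟩).1
    refine ⟨x, hxK₀, le_antisymm ?_ (csInf_le hQim_bdd ⟨x, hxK₀, rfl⟩)⟩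
    by_contra hgt
    push_neg at hgt
    have hmidt : m₀ < (m₀ + Q x) / 2 := by linarith
    have h2 := (hx ⟨(m₀ + Q x) / 2, hmidt⟩).2
    simp only at h2
    linarith
  -- uniqueness of the minimizer
  have huniq : ∀ y ∈ K₀, Q y = m₀ → y = xm := by
    intro y hyK₀ hyQ
    by_contra hney
    set c : ℝ := ‖Λ y - Λ xm‖ with hcdef
    have hc : 0 < c := by
      rw [hcdef, norm_pos_iff, sub_ne_zero]
      intro h
      exact hney (hΛinj' y hyK₀ xm hxmK₀ h)
    set mid : V := (1/2 : ℝ) • y + (1/2 : ℝ) • xm with hmiddef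
    have hmidK₀ : mid ∈ K₀ :=
      hK₀conv hyK₀ hxmK₀ (by norm_num) (by norm_num) (by norm_num)
    have hlow : ∀ l : List (Fin n), c / M ≤ ‖Λ (app S l y) - Λ (app S l xm)‖ := by
      intro l
      have h1 := hLip l.reverse (app S l y) (app_mapsTo hSmy l hyK₀)
        (app S l xm) (app_mapsTo hSmy l hxmK₀)
      rw [app_reverse hSm hSi l y hyK₀.1, app_reverse hSm hSi l xm hxmK₀.1] at h1
      rw [div_le_iff₀ hM0]
      calc c = ‖Λ y - Λ xm‖ := rfl
        _ ≤ M * ‖Λ (app S l y) - Λ (app S l xm)‖ := h1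
        _ = ‖Λ (app S l y) - Λ (app S l xm)‖ * M := mul_comm _ _
    have hkey : ∀ l : List (Fin n), Hf l mid ≤ m₀ - (c/M) * (c/M) / 4 := by
      intro l
      have haff := app_affineOn hSmy hSay l y hyK₀ xm hxmK₀ (1/2)
        (by norm_num) (by norm_num)
      have h12 : (1:ℝ) - 1/2 = 1/2 := by norm_num
      rw [h12, ← hmiddef] at haff
      set aa := Λ (app S l y) with haadef
      set bb := Λ (app S l xm) with hbbdef
      have hval : Λ (app S l mid) = (1/2 : ℝ) • (aa + bb) := by
        rw [haff, map_add, map_smul, map_smul, smul_add]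
      have hay : Hf l y ≤ m₀ := by rw [← hyQ]; exact hHle y hyK₀ l
      have haxm : Hf l xm ≤ m₀ := by rw [← hxmQ]; exact hHle xm hxmK₀ l
      have hcM : 0 ≤ c / M := by positivity
      have hsq : (c/M) * (c/M) ≤ ‖aa - bb‖ * ‖aa - bb‖ :=
        mul_self_le_mul_self hcM (hlow l)
      have hp := parallelogram_law_with_norm ℝ aa bb
      have hXeq : Hf l mid = (1/2 * ‖aa + bb‖) * (1/2 * ‖aa + bb‖) := by
        show ‖Λ (app S l mid)‖ * ‖Λ (app S l mid)‖ = _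
        rw [hval, norm_smul, Real.norm_eq_abs,
          abs_of_pos (by norm_num : (0:ℝ) < 1/2)]
      have hexp : (1/2 * ‖aa + bb‖) * (1/2 * ‖aa + bb‖)
          = (‖aa + bb‖ * ‖aa + bb‖) / 4 := by ring
      rw [hXeq, hexp]
      have hay' : ‖aa‖ * ‖aa‖ ≤ m₀ := hay
      have haxm' : ‖bb‖ * ‖bb‖ ≤ m₀ := haxm
      linarith
    have hQmid_le : Q mid ≤ m₀ - (c/M) * (c/M) / 4 := ciSup_le hkey
    have hge : m₀ ≤ Q mid := csInf_le hQim_bdd ⟨mid, hmidK₀, rfl⟩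
    have hpos : 0 < (c/M) * (c/M) / 4 := by positivity
    linarith
  refine ⟨xm, hxmK₀.1, fun i => ?_⟩
  have h1 : S i xm ∈ K₀ := hK₀inv i hxmK₀
  have h2 : Q (S i xm) = m₀ := by rw [hQS i xm hxmK₀, hxmQ]
  exact huniq (S i xm) h1 h2
end

section
/- Let V be a Hausdorff locally convex real topological vector space, K ⊆ V a nonempty compact convex set, and S and T reflections of K. Set K₁ = K_T ∩ S(K_T), where K_T = {p ∈ K : T(p) = p}. Then K₁ is nonempty and S(K₁) = K₁. -/
/-- Dyadic Birkhoff averages: `avgIter f n` is the average of `f^[k]` for `k < 2^n`,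
built from iterated midpoints. -/
noncomputable def avgIter {V : Type*} [AddCommGroup V] [Module ℝ V] (f : V → V) : ℕ → V → V
  | 0 => id
  | (n + 1) => fun x => (2⁻¹ : ℝ) • avgIter f n x + (2⁻¹ : ℝ) • f^[2 ^ n] (avgIter f n x)

section Aux

variable {V : Type*} [AddCommGroup V] [Module ℝ V] [TopologicalSpace V]
  [IsTopologicalAddGroup V] [ContinuousSMul ℝ V] [T2Space V]

/-- Small scalar multiples of a compact set lie in a given neighborhood of `0`. -/
lemma smul_compact_small {D : Set V} (hD : IsCompact D) {W : Set V} (hW : W ∈ nhds (0 : V)) :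
    ∃ ε > (0 : ℝ), ∀ t : ℝ, |t| < ε → ∀ d ∈ D, t • d ∈ W := by
  have hcont : Continuous fun p : ℝ × V => p.1 • p.2 := continuous_smul
  have hopen : IsOpen ((fun p : ℝ × V => p.1 • p.2) ⁻¹' interior W) :=
    isOpen_interior.preimage hcont
  have hsub : ({(0 : ℝ)} : Set ℝ) ×ˢ D ⊆ (fun p : ℝ × V => p.1 • p.2) ⁻¹' interior W := by
    rintro ⟨t, d⟩ ⟨ht, hd⟩
    simp only [Set.mem_singleton_iff] at ht
    simp only [Set.mem_preimage, ht, zero_smul]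
    exact mem_interior_iff_mem_nhds.mpr hW
  obtain ⟨u, v, hu, hv, h0u, hDv, huv⟩ :=
    generalized_tube_lemma isCompact_singleton hD hopen hsub
  obtain ⟨ε, hε, hball⟩ := Metric.isOpen_iff.mp hu 0 (h0u rfl)
  refine ⟨ε, hε, fun t ht d hd => ?_⟩
  have htu : t ∈ u := hball (by simpa [Real.dist_eq] using ht)
  have : (t, d) ∈ u ×ˢ v := ⟨htu, hDv hd⟩
  exact interior_subset (huv this)

/-- Markov–Kakutani fixed point theorem for a single continuous affine self-map of a
nonempty compact convex set. -/
lemma exists_fixedPoint_of_affine (K : Set V) (hne : K.Nonempty) (hcomp : IsCompact K)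
    (hconv : Convex ℝ K) (f : V → V) (hmap : Set.MapsTo f K K) (hcont : ContinuousOn f K)
    (haff : IsAffineOn f K) : ∃ x ∈ K, f x = x := by
  have haffhalf : ∀ x ∈ K, ∀ y ∈ K,
      f ((2⁻¹ : ℝ) • x + (2⁻¹ : ℝ) • y) = (2⁻¹ : ℝ) • f x + (2⁻¹ : ℝ) • f y := by
    intro x hx y hy
    have h12 : (1 - 2⁻¹ : ℝ) = 2⁻¹ := by norm_num
    have := haff x hx y hy 2⁻¹ (by norm_num) (by norm_num)
    rwa [h12] at this
  have hmapIt : ∀ m, Set.MapsTo f^[m] K K := fun m => hmap.iterate m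
  have hcontIt : ∀ m, ContinuousOn f^[m] K := by
    intro m; induction m with
    | zero => simpa using continuousOn_id
    | succ m ih =>
      rw [Function.iterate_succ']
      exact hcont.comp ih (hmapIt m)
  have hIthalf : ∀ m, ∀ x ∈ K, ∀ y ∈ K,
      f^[m] ((2⁻¹ : ℝ) • x + (2⁻¹ : ℝ) • y) = (2⁻¹ : ℝ) • f^[m] x + (2⁻¹ : ℝ) • f^[m] y := by
    intro m; induction m with
    | zero => intro x _ y _; simp
    | succ m ih =>
      intro x hx y hy
      rw [Function.iterate_succ_apply', Function.iterate_succ_apply',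
        Function.iterate_succ_apply', ih x hx y hy]
      exact haffhalf _ (hmapIt m hx) _ (hmapIt m hy)
  have hmapH : ∀ n, Set.MapsTo (avgIter f n) K K := by
    intro n; induction n with
    | zero => exact fun x hx => hx
    | succ n ih =>
      intro x hx
      exact hconv (ih hx) (hmapIt _ (ih hx)) (by norm_num) (by norm_num) (by norm_num)
  have hcontH : ∀ n, ContinuousOn (avgIter f n) K := by
    intro n; induction n with
    | zero => simpa [avgIter] using continuousOn_id
    | succ n ih =>
      show ContinuousOn (fun x => (2⁻¹ : ℝ) • avgIter f n x
        + (2⁻¹ : ℝ) • f^[2 ^ n] (avgIter f n x)) K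
      exact (ih.const_smul _).add (((hcontIt _).comp ih (hmapH n)).const_smul _)
  have hcommH : ∀ n, ∀ x ∈ K, f (avgIter f n x) = avgIter f n (f x) := by
    intro n; induction n with
    | zero => intro x _; rfl
    | succ n ih =>
      intro x hx
      show f ((2⁻¹ : ℝ) • avgIter f n x + (2⁻¹ : ℝ) • f^[2 ^ n] (avgIter f n x)) = _
      rw [haffhalf _ (hmapH n hx) _ (hmapIt _ (hmapH n hx)),
        ← Function.iterate_succ_apply' f (2 ^ n), Function.iterate_succ_apply f (2 ^ n),
        ih x hx]
      rfl
  have hcommHIt : ∀ m n, ∀ x ∈ K, f^[m] (avgIter f n x) = avgIter f n (f^[m] x) := by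
    intro m; induction m with
    | zero => intro n x _; rfl
    | succ m ih =>
      intro n x hx
      rw [Function.iterate_succ_apply' f m, ih n x hx, hcommH n _ (hmapIt m hx),
        ← Function.iterate_succ_apply' f m x]
  have hHhalf : ∀ n, ∀ x ∈ K, ∀ y ∈ K,
      avgIter f n ((2⁻¹ : ℝ) • x + (2⁻¹ : ℝ) • y)
        = (2⁻¹ : ℝ) • avgIter f n x + (2⁻¹ : ℝ) • avgIter f n y := by
    intro n; induction n with
    | zero => intro x _ y _; rfl
    | succ n ih =>
      intro x hx y hy
      show (2⁻¹ : ℝ) • avgIter f n ((2⁻¹ : ℝ) • x + (2⁻¹ : ℝ) • y)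
          + (2⁻¹ : ℝ) • f^[2 ^ n] (avgIter f n ((2⁻¹ : ℝ) • x + (2⁻¹ : ℝ) • y)) = _
      rw [ih x hx y hy, hIthalf _ _ (hmapH n hx) _ (hmapH n hy)]
      show _ = (2⁻¹ : ℝ) • ((2⁻¹ : ℝ) • avgIter f n x + (2⁻¹ : ℝ) • f^[2 ^ n] (avgIter f n x))
          + (2⁻¹ : ℝ) • ((2⁻¹ : ℝ) • avgIter f n y + (2⁻¹ : ℝ) • f^[2 ^ n] (avgIter f n y))
      module
  have hdecr : ∀ n, avgIter f (n + 1) '' K ⊆ avgIter f n '' K := by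
    rintro n _ ⟨x, hx, rfl⟩
    refine ⟨(2⁻¹ : ℝ) • x + (2⁻¹ : ℝ) • f^[2 ^ n] x,
      hconv hx (hmapIt _ hx) (by norm_num) (by norm_num) (by norm_num), ?_⟩
    rw [hHhalf n x hx _ (hmapIt _ hx), ← hcommHIt _ n x hx]
    rfl
  have hkey : ∀ n, ∀ x ∈ K,
      f (avgIter f n x) - avgIter f n x = ((2 : ℝ) ^ n)⁻¹ • (f^[2 ^ n] x - x) := by
    intro n; induction n with
    | zero => intro x _; simp [avgIter]
    | succ n ih =>
      intro x hx
      have hbK : f^[2 ^ n] x ∈ K := hmapIt _ hx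
      have e1 : f^[2 ^ n] (avgIter f n x) = avgIter f n (f^[2 ^ n] x) := hcommHIt _ n x hx
      show f ((2⁻¹ : ℝ) • avgIter f n x + (2⁻¹ : ℝ) • f^[2 ^ n] (avgIter f n x))
          - ((2⁻¹ : ℝ) • avgIter f n x + (2⁻¹ : ℝ) • f^[2 ^ n] (avgIter f n x))
          = ((2 : ℝ) ^ (n + 1))⁻¹ • (f^[2 ^ (n + 1)] x - x)
      rw [haffhalf _ (hmapH n hx) _ (hmapIt _ (hmapH n hx)), e1]
      have h2 : f^[2 ^ (n + 1)] x = f^[2 ^ n] (f^[2 ^ n] x) := by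
        rw [← Function.iterate_add_apply]
        congr 1
        rw [pow_succ, mul_two]
      have i1 := ih x hx
      have i2 := ih _ hbK
      have hcoef : ((2 : ℝ) ^ (n + 1))⁻¹ = 2⁻¹ * ((2 : ℝ) ^ n)⁻¹ := by
        rw [pow_succ', mul_inv]
      rw [h2, hcoef]
      have expand : (2⁻¹ : ℝ) • f (avgIter f n x) + (2⁻¹ : ℝ) • f (avgIter f n (f^[2 ^ n] x))
            - ((2⁻¹ : ℝ) • avgIter f n x + (2⁻¹ : ℝ) • avgIter f n (f^[2 ^ n] x))
          = (2⁻¹ : ℝ) • (f (avgIter f n x) - avgIter f n x)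
            + (2⁻¹ : ℝ) • (f (avgIter f n (f^[2 ^ n] x)) - avgIter f n (f^[2 ^ n] x)) := by
        module
      rw [expand, i1, i2]
      module
  -- the decreasing sequence of compact sets
  set C : ℕ → Set V := fun n => avgIter f n '' K with hC
  have hCcomp : ∀ n, IsCompact (C n) := fun n => hcomp.image_of_continuousOn (hcontH n)
  have hCne : ∀ n, (C n).Nonempty := fun n => hne.image _
  have hint : (⋂ n, C n).Nonempty :=
    IsCompact.nonempty_iInter_of_sequence_nonempty_isCompact_isClosed C hdecr hCne
      (hCcomp 0) (fun n => (hCcomp n).isClosed)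
  obtain ⟨x, hx⟩ := hint
  have hxC : ∀ n, x ∈ C n := fun n => Set.mem_iInter.mp hx n
  have hxK : x ∈ K := by
    have := hxC 0
    simpa [hC, avgIter] using this
  refine ⟨x, hxK, ?_⟩
  have hv : ∀ W ∈ nhds (0 : V), f x - x ∈ W := by
    intro W hW
    have hDcomp : IsCompact ((fun p : V × V => p.1 - p.2) '' K ×ˢ K) :=
      (hcomp.prod hcomp).image (continuous_fst.sub continuous_snd)
    obtain ⟨ε, hε, hball⟩ := smul_compact_small hDcomp hW
    obtain ⟨n, hn⟩ := pow_unbounded_of_one_lt (ε⁻¹) (one_lt_two : (1:ℝ) < 2)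
    have hpow : ((2 : ℝ) ^ n)⁻¹ < ε := by
      rw [inv_lt_comm₀ (by positivity) hε]
      exact hn
    obtain ⟨y, hy, hyx⟩ := hxC n
    have := hkey n y hy
    rw [hyx] at this
    rw [this]
    refine hball _ (by rw [abs_of_pos (by positivity)]; exact hpow) _
      ⟨(f^[2 ^ n] y, y), ⟨hmapIt _ hy, hy⟩, rfl⟩
  have h0 : (0 : V) ∈ closure {f x - x} := by
    rw [mem_closure_iff_nhds]
    intro W hW
    exact ⟨f x - x, hv W hW, rfl⟩
  rw [closure_singleton, Set.mem_singleton_iff] at h0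
  exact sub_eq_zero.mp h0.symm

end Aux

/-- If `S` and `T` are reflections of a nonempty compact convex set `K` and
`K₁ = K_T ∩ S(K_T)` where `K_T` is the fixed point set of `T`, then `K₁` is nonempty
and invariant under `S`, i.e. `S(K₁) = K₁`. -/
theorem fixedSet_inter_image_nonempty_and_invariant
    {V : Type*} [AddCommGroup V] [Module ℝ V] [TopologicalSpace V]
    [IsTopologicalAddGroup V] [ContinuousSMul ℝ V] [T2Space V] [LocallyConvexSpace ℝ V]
    (K : Set V) (hne : K.Nonempty) (hcomp : IsCompact K) (hconv : Convex ℝ K)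
    (S T : V → V) (hS : IsReflection S K) (hT : IsReflection T K) :
    ({p ∈ K | T p = p} ∩ S '' {p ∈ K | T p = p}).Nonempty ∧
      S '' ({p ∈ K | T p = p} ∩ S '' {p ∈ K | T p = p}) =
        {p ∈ K | T p = p} ∩ S '' {p ∈ K | T p = p} := by
  obtain ⟨hSmap, hScont, hSaff, hSinv⟩ := hS
  obtain ⟨hTmap, hTcont, hTaff, hTinv⟩ := hT
  -- U = S ∘ T ∘ S, R = T ∘ U
  set U : V → V := fun x => S (T (S x)) with hU
  set R : V → V := fun x => T (U x) with hR
  have hUmap : Set.MapsTo U K K := fun x hx => hSmap (hTmap (hSmap hx))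
  have hRmap : Set.MapsTo R K K := fun x hx => hTmap (hUmap hx)
  have hUinv : ∀ p ∈ K, U (U p) = p := by
    intro p hp
    show S (T (S (S (T (S p))))) = p
    rw [hSinv _ (hTmap (hSmap hp)), hTinv _ (hSmap hp), hSinv _ hp]
  have hRcont : ContinuousOn R K :=
    (hTcont.comp ((hScont.comp ((hTcont.comp hScont hSmap)) (hTmap.comp hSmap))) hUmap)
  have hRaff : IsAffineOn R K := by
    intro x hx y hy t ht0 ht1
    show T (S (T (S (t • x + (1 - t) • y)))) = _
    rw [hSaff x hx y hy t ht0 ht1, hTaff _ (hSmap hx) _ (hSmap hy) t ht0 ht1,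
      hSaff _ (hTmap (hSmap hx)) _ (hTmap (hSmap hy)) t ht0 ht1,
      hTaff _ (hSmap (hTmap (hSmap hx))) _ (hSmap (hTmap (hSmap hy))) t ht0 ht1]
  obtain ⟨x₀, hx₀K, hx₀⟩ := exists_fixedPoint_of_affine K hne hcomp hconv R hRmap hRcont hRaff
  -- U x₀ = T x₀
  have hUx₀ : U x₀ = T x₀ := by
    have := congrArg T hx₀
    rwa [show T (R x₀) = U x₀ from hTinv _ (hUmap hx₀K)] at this
  -- the midpoint q of x₀ and T x₀
  set q : V := (2⁻¹ : ℝ) • x₀ + (1 - 2⁻¹ : ℝ) • T x₀ with hq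
  have hqK : q ∈ K := hconv hx₀K (hTmap hx₀K) (by norm_num) (by norm_num) (by norm_num)
  have hTq : T q = q := by
    rw [hq, hTaff x₀ hx₀K _ (hTmap hx₀K) 2⁻¹ (by norm_num) (by norm_num),
      hTinv _ hx₀K]
    module
  have hRTx₀ : R (T x₀) = T x₀ := by
    show T (U (T x₀)) = T x₀
    rw [← hUx₀, hUinv _ hx₀K, hUx₀]
  have hRq : R q = q := by
    rw [hq, hRaff x₀ hx₀K _ (hTmap hx₀K) 2⁻¹ (by norm_num) (by norm_num), hx₀, hRTx₀]
  have hUq : U q = q := by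
    have := congrArg T hRq
    rwa [show T (R q) = U q from hTinv _ (hUmap hqK), hTq] at this
  -- z = S q is T-fixed and S z = q
  have hTSq : T (S q) = S q := by
    have := congrArg S hUq
    rwa [show S (U q) = T (S q) from hSinv _ (hTmap (hSmap hqK))] at this
  have hSSq : S (S q) = q := hSinv _ hqK
  -- the invariance step
  have hstep : ∀ p ∈ ({p ∈ K | T p = p} ∩ S '' {p ∈ K | T p = p}),
      S p ∈ ({p ∈ K | T p = p} ∩ S '' {p ∈ K | T p = p}) := by
    rintro p ⟨⟨hpK, hTp⟩, y, ⟨hyK, hTy⟩, hSy⟩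
    have hSp : S p = y := by rw [← hSy, hSinv y hyK]
    exact ⟨⟨by rw [hSp]; exact hyK, by rw [hSp]; exact hTy⟩, p, ⟨hpK, hTp⟩, rfl⟩
  constructor
  · exact ⟨q, ⟨hqK, hTq⟩, S q, ⟨hSmap hqK, hTSq⟩, hSSq⟩
  · apply Set.Subset.antisymm
    · rintro _ ⟨p, hp, rfl⟩
      exact hstep p hp
    · intro p hp
      exact ⟨S p, hstep p hp, hSinv p hp.1.1⟩
end
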